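/- (Gaussian mechanism) Let ε ∈ (0,1], δ ∈ (0,1), Δ > 0, and let μ₁, μ₂ ∈ ℝ with |μ₁ − μ₂| ≤ Δ. Set σ = Δ·√(2 log(1.25/δ))/ε. Then for every Borel set A ⊆ ℝ, the Gaussian measures with means μ₁, μ₂ and variance σ² satisfy N(μ₁, σ²)(A) ≤ e^ε · N(μ₂, σ²)(A) + δ; that is, releasing a Δ-sensitive real statistic perturbed by N(0, σ²) noise is (ε,δ)-differentially private. -/

import Mathlib

set_option maxHeartbeats 1000000

open MeasureTheory ProbabilityTheory Real Set
open scoped NNReal ENNReal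

lemma gauss_sym (μ : ℝ) (v : ℝ≥0) (s : ℝ) :
    gaussianReal μ v (Set.Iio (μ - s)) = gaussianReal μ v (Set.Ioi (μ + s)) := by
  have h1 : (gaussianReal μ v).map (fun x => -x + 2*μ) = gaussianReal μ v := by
    have h2 : (gaussianReal μ v).map (fun x => (-1 : ℝ) * x) =
        gaussianReal ((-1 : ℝ) * μ) (⟨(-1:ℝ)^2, sq_nonneg _⟩ * v) := gaussianReal_map_const_mul (-1)
    have h3 : (⟨(-1:ℝ)^2, sq_nonneg _⟩ * v : ℝ≥0) = v := by
      apply NNReal.eq; show (-1:ℝ)^2 * (v:ℝ) = v; norm_num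
    rw [h3] at h2
    have h4 : (fun x : ℝ => -x + 2*μ) = (fun x => x + 2*μ) ∘ (fun x => (-1:ℝ) * x) := by
      ext x; simp only [Function.comp_apply]; ring
    rw [h4, ← Measure.map_map (by fun_prop) (by fun_prop), h2,
      gaussianReal_map_add_const]
    congr 1; ring
  conv_rhs => rw [← h1]
  rw [Measure.map_apply (by fun_prop) measurableSet_Ioi]
  congr 1
  ext x
  simp only [Set.mem_Iio, Set.mem_preimage, Set.mem_Ioi]
  constructor <;> intro h <;> linarith

lemma gauss_half (μ : ℝ) (v : ℝ≥0) (hv : v ≠ 0) :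
    gaussianReal μ v (Set.Ioi μ) = 1/2 := by
  set m := gaussianReal μ v with hm
  have hsing : m {μ} = 0 :=
    gaussianReal_absolutelyContinuous μ hv (volume_singleton)
  have hsym : m (Set.Iio μ) = m (Set.Ioi μ) := by
    have := gauss_sym μ v 0
    simpa using this
  have hunion : m (Set.Iio μ) + m (Set.Ioi μ) = 1 := by
    have hd : Disjoint (Set.Iio μ) (Set.Ioi μ) := by simp [Set.disjoint_left]; intro a h1; linarith
    rw [← measure_union hd measurableSet_Ioi]
    have : Set.Iio μ ∪ Set.Ioi μ = {μ}ᶜ := by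
      ext x; simp [lt_or_lt_iff_ne]
    rw [this, measure_compl (measurableSet_singleton μ) (measure_ne_top _ _), hsing,
      measure_univ, tsub_zero]
  rw [hsym, ← two_mul] at hunion
  have h2 : m (Set.Ioi μ) = 1/2 := by
    rw [ENNReal.eq_div_iff (by norm_num) (by norm_num), hunion]
  exact h2

lemma gauss_tail (μ : ℝ) (v : ℝ≥0) (hv : v ≠ 0) (s : ℝ) (hs : 0 ≤ s) :
    gaussianReal μ v (Set.Ioi (μ + s)) ≤
      ENNReal.ofReal (Real.exp (-s^2/(2*(v:ℝ))) / 2) := by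
  have hvpos : (0:ℝ) < (v:ℝ) := by exact_mod_cast pos_iff_ne_zero.mpr hv
  rw [gaussianReal_apply μ hv]
  have hpt : ∀ x ∈ Set.Ioi (μ + s), gaussianPDF μ v x ≤
      ENNReal.ofReal (Real.exp (-s^2/(2*(v:ℝ)))) * gaussianPDF (μ+s) v x := by
    intro x hx
    simp only [Set.mem_Ioi] at hx
    rw [gaussianPDF, gaussianPDF, ← ENNReal.ofReal_mul (Real.exp_nonneg _)]
    apply ENNReal.ofReal_le_ofReal
    rw [gaussianPDFReal, gaussianPDFReal, mul_left_comm, ← Real.exp_add]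
    refine mul_le_mul_of_nonneg_left ?_ (inv_nonneg.2 (Real.sqrt_nonneg _))
    refine Real.exp_le_exp.2 ?_
    rw [← add_div]
    refine (div_le_div_iff_of_pos_right (by positivity)).2 ?_
    nlinarith [sq_nonneg (x - μ - s)]
  calc ∫⁻ x in Set.Ioi (μ+s), gaussianPDF μ v x
      ≤ ∫⁻ x in Set.Ioi (μ+s),
          ENNReal.ofReal (Real.exp (-s^2/(2*(v:ℝ)))) * gaussianPDF (μ+s) v x :=
        setLIntegral_mono (measurable_const.mul (measurable_gaussianPDF _ _)) hpt
    _ = ENNReal.ofReal (Real.exp (-s^2/(2*(v:ℝ)))) *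
          ∫⁻ x in Set.Ioi (μ+s), gaussianPDF (μ+s) v x :=
        lintegral_const_mul _ (measurable_gaussianPDF _ _)
    _ = ENNReal.ofReal (Real.exp (-s^2/(2*(v:ℝ)))) * (1/2) := by
        rw [← gaussianReal_apply _ hv, gauss_half _ _ hv]
    _ = ENNReal.ofReal (Real.exp (-s^2/(2*(v:ℝ))) / 2) := by
        rw [show ((1:ℝ≥0∞)/2) = ENNReal.ofReal (1/2 : ℝ) by
            rw [ENNReal.ofReal_div_of_pos two_pos]; simp,
          ← ENNReal.ofReal_mul (Real.exp_nonneg _)]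
        ring_nf

lemma gauss_box (μ : ℝ) (v : ℝ≥0) (hv : v ≠ 0) (a b : ℝ) :
    gaussianReal μ v (Set.Ioc a b) ≤
      ENNReal.ofReal ((b - a) * (Real.sqrt (2*π*(v:ℝ)))⁻¹) := by
  rw [gaussianReal_apply μ hv]
  have hpt : ∀ x ∈ Set.Ioc a b, gaussianPDF μ v x ≤
      ENNReal.ofReal ((Real.sqrt (2*π*(v:ℝ)))⁻¹) := by
    intro x _
    apply ENNReal.ofReal_le_ofReal
    rw [gaussianPDFReal]
    have h1 : Real.exp (-(x-μ)^2/(2*(v:ℝ))) ≤ 1 := by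
      rw [Real.exp_le_one_iff]
      exact div_nonpos_of_nonpos_of_nonneg (neg_nonpos.2 (sq_nonneg _)) (by positivity)
    calc (Real.sqrt (2*π*(v:ℝ)))⁻¹ * Real.exp (-(x-μ)^2/(2*(v:ℝ)))
        ≤ (Real.sqrt (2*π*(v:ℝ)))⁻¹ * 1 :=
          mul_le_mul_of_nonneg_left h1 (inv_nonneg.2 (Real.sqrt_nonneg _))
      _ = (Real.sqrt (2*π*(v:ℝ)))⁻¹ := mul_one _
  calc ∫⁻ x in Set.Ioc a b, gaussianPDF μ v x
      ≤ ∫⁻ _ in Set.Ioc a b, ENNReal.ofReal ((Real.sqrt (2*π*(v:ℝ)))⁻¹) :=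
        setLIntegral_mono measurable_const hpt
    _ = ENNReal.ofReal ((Real.sqrt (2*π*(v:ℝ)))⁻¹) * volume (Set.Ioc a b) := by
        rw [setLIntegral_const]
    _ = ENNReal.ofReal ((Real.sqrt (2*π*(v:ℝ)))⁻¹) * ENNReal.ofReal (b - a) := by
        rw [Real.volume_Ioc]
    _ = ENNReal.ofReal ((b - a) * (Real.sqrt (2*π*(v:ℝ)))⁻¹) := by
        rw [← ENNReal.ofReal_mul (inv_nonneg.2 (Real.sqrt_nonneg _)), mul_comm]

lemma exp_quarter_le : Real.exp (1/4) ≤ 1.3 := by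
  have h4 : Real.exp (1/4) ^ (4:ℕ) = Real.exp 1 := by
    rw [← Real.exp_nat_mul]; norm_num
  nlinarith [Real.exp_pos (1/4 : ℝ), Real.exp_one_lt_d9, h4,
    sq_nonneg (Real.exp (1/4) - 1.3), sq_nonneg (Real.exp (1/4) + 1.3)]

lemma exp_half_le : Real.exp (1/2) ≤ 2.5 := by
  have h2 : Real.exp (1/2) ^ (2:ℕ) = Real.exp 1 := by
    rw [← Real.exp_nat_mul]; norm_num
  nlinarith [Real.exp_pos (1/2 : ℝ), Real.exp_one_lt_d9, h2]

lemma log_125_ge : (1/5 : ℝ) ≤ Real.log 1.25 := by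
  have h5 : Real.exp (1/5) ^ (5:ℕ) = Real.exp 1 := by
    rw [← Real.exp_nat_mul]; norm_num
  have hle : Real.exp (1/5) ≤ 1.25 := by
    nlinarith [Real.exp_pos (1/5 : ℝ), Real.exp_one_lt_d9, h5,
      sq_nonneg (Real.exp (1/5) - 1.25), sq_nonneg (Real.exp (1/5) + 1.25),
      sq_nonneg (Real.exp (1/5)^2 - 1.25^2)]
  have := Real.log_le_log (Real.exp_pos _) hle
  rwa [Real.log_exp] at this

section Numeric
variable {ε δ Δ β σ : ℝ}

lemma numeric_setup (hε0 : 0 < ε) (hδ0 : 0 < δ) (hδ1 : δ < 1) (hΔ : 0 < Δ)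
    (hβ0 : 0 < β) (hβΔ : β ≤ Δ)
    (hσ : σ = Δ * Real.sqrt (2 * Real.log (1.25 / δ)) / ε) :
    ∃ L c : ℝ, L = Real.log (1.25/δ) ∧ 1/5 ≤ L ∧ c = Real.sqrt (2*L) ∧ 0 < c ∧
      c^2 = 2*L ∧ 0 < σ ∧ σ * ε = Δ * c ∧ δ = 1.25 * Real.exp (-L) ∧
      σ*c - Δ/2 ≤ σ^2*ε/β - β/2 := by
  set L := Real.log (1.25/δ) with hL
  have hL5 : 1/5 ≤ L := le_trans log_125_ge
    (Real.log_le_log (by norm_num) (by rw [le_div_iff₀ hδ0]; nlinarith))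
  have hL0 : 0 < L := lt_of_lt_of_le (by norm_num) hL5
  set c := Real.sqrt (2*L) with hc
  have hc0 : 0 < c := Real.sqrt_pos.2 (by linarith)
  have hc2 : c^2 = 2*L := Real.sq_sqrt (by linarith)
  have hσ0 : 0 < σ := by rw [hσ]; positivity
  have hσε : σ * ε = Δ * c := by rw [hσ]; field_simp
  have hδe : δ = 1.25 * Real.exp (-L) := by
    rw [Real.exp_neg, hL, Real.exp_log (by positivity)]
    field_simp
  refine ⟨L, c, rfl, hL5, rfl, hc0, hc2, hσ0, hσε, hδe, ?_⟩
  have h1 : σ*c ≤ σ^2*ε/β := by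
    rw [le_div_iff₀ hβ0]
    have h2 : σ*c*Δ = σ^2*ε := by linear_combination (-σ) * hσε
    nlinarith [mul_le_mul_of_nonneg_left hβΔ (mul_nonneg hσ0.le hc0.le)]
  linarith

lemma numeric1 (hε0 : 0 < ε) (hε1 : ε ≤ 1) (hδ0 : 0 < δ) (hδ1 : δ < 1) (hΔ : 0 < Δ)
    (hβ0 : 0 < β) (hβΔ : β ≤ Δ)
    (hσ : σ = Δ * Real.sqrt (2 * Real.log (1.25 / δ)) / ε) :
    Real.exp (-(σ^2*ε/β - β/2)^2/(2*σ^2))/2 ≤ δ := by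
  obtain ⟨L, c, hL, hL5, hc, hc0, hc2, hσ0, hσε, hδe, hsl⟩ :=
    numeric_setup hε0 hδ0 hδ1 hΔ hβ0 hβΔ hσ
  set s := σ^2*ε/β - β/2 with hs
  rcases le_or_gt (1/2 : ℝ) (c^2) with hbig | hsmall
  · -- large c: true tail bound
    have hΔσ : Δ/2 ≤ σ/(2*c) := by
      rw [div_le_div_iff₀ (by norm_num) (by positivity)]
      nlinarith
    have hs0 : σ*(c - 1/(2*c)) ≤ s := by
      have h1 : σ * (1/(2*c)) = σ/(2*c) := by ring
      nlinarith [mul_le_mul_of_nonneg_left hΔσ (le_of_lt hσ0)]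
    have ht0 : 0 ≤ c - 1/(2*c) := by
      rw [sub_nonneg, div_le_iff₀ (by positivity)]
      nlinarith
    have hsq : σ^2*(c - 1/(2*c))^2 ≤ s^2 := by
      have h0 : 0 ≤ σ*(c - 1/(2*c)) := by positivity
      nlinarith
    have hexpand : (c - 1/(2*c))^2 = c^2 - 1 + 1/(4*c^2) := by
      field_simp; ring
    have hinv : 0 ≤ 1/(4*c^2) := by positivity
    have hT : 2*L - 1 ≤ (c - 1/(2*c))^2 := by
      rw [hexpand, ← hc2]; linarith
    have hexp : -s^2/(2*σ^2) ≤ 1/2 - L := by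
      rw [div_le_iff₀ (by positivity)]
      linarith [mul_le_mul_of_nonneg_left hT (sq_nonneg σ), hsq]
    calc Real.exp (-s^2/(2*σ^2))/2 ≤ Real.exp (1/2 - L)/2 := by
          have h := Real.exp_le_exp.2 hexp; linarith
      _ = Real.exp (1/2) * Real.exp (-L) / 2 := by rw [← Real.exp_add]; ring_nf
      _ ≤ 2.5 * Real.exp (-L) / 2 := by
          have h := mul_le_mul_of_nonneg_right exp_half_le (Real.exp_pos (-L)).le
          linarith
      _ = δ := by rw [hδe]; ring
  · -- small c: δ is close to 1
    have hL4 : L < 1/4 := by linarith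
    have hd : 1.25/1.3 ≤ δ := by
      rw [hδe]
      have h1 : Real.exp (-(1/4:ℝ)) ≤ Real.exp (-L) := Real.exp_le_exp.2 (by linarith)
      have h2 : (1:ℝ)/1.3 ≤ Real.exp (-(1/4:ℝ)) := by
        rw [Real.exp_neg, le_inv_comm₀ (by norm_num) (Real.exp_pos _)]
        calc Real.exp (1/4:ℝ) ≤ 1.3 := exp_quarter_le
          _ = (1/1.3 : ℝ)⁻¹ := by norm_num
      have h3 := mul_le_mul_of_nonneg_left (h2.trans h1) (by norm_num : (0:ℝ) ≤ 1.25)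
      linarith
    have hexp1 : Real.exp (-s^2/(2*σ^2)) ≤ 1 := by
      rw [Real.exp_le_one_iff]
      exact div_nonpos_of_nonpos_of_nonneg (neg_nonpos.2 (sq_nonneg _)) (by positivity)
    linarith

lemma numeric2 (hε0 : 0 < ε) (hε1 : ε ≤ 1) (hδ0 : 0 < δ) (hδ1 : δ < 1) (hΔ : 0 < Δ)
    (hβ0 : 0 < β) (hβΔ : β ≤ Δ)
    (hσ : σ = Δ * Real.sqrt (2 * Real.log (1.25 / δ)) / ε)
    (s : ℝ) (hsval : s = σ^2*ε/β - β/2) (hsneg : s < 0) :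
    -s * (Real.sqrt (2*π*σ^2))⁻¹ + 1/2 ≤ δ := by
  obtain ⟨L, c, hL, hL5, hc, hc0, hc2, hσ0, hσε, hδe, hsl⟩ :=
    numeric_setup hε0 hδ0 hδ1 hΔ hβ0 hβΔ hσ
  rw [← hsval] at hsl
  have hΔ2 : Δ/2 = σ*ε/(2*c) := by
    field_simp
    linarith [hσε]
  have h1 : σ*c < σ*ε/(2*c) := by
    rw [← hΔ2]; linarith
  have h1' : σ*c*(2*c) < σ*ε := by
    rw [← div_mul_cancel₀ (σ*ε) (ne_of_gt (by positivity : (0:ℝ) < 2*c))]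
    exact mul_lt_mul_of_pos_right h1 (by positivity)
  have h2 : 2*c^2 < ε := by nlinarith
  have hL4 : L < 1/4 := by nlinarith
  have hd : 1.25/1.3 ≤ δ := by
    rw [hδe]
    have h1 : Real.exp (-(1/4:ℝ)) ≤ Real.exp (-L) := Real.exp_le_exp.2 (by linarith)
    have h2 : (1:ℝ)/1.3 ≤ Real.exp (-(1/4:ℝ)) := by
      rw [Real.exp_neg, le_inv_comm₀ (by norm_num) (Real.exp_pos _)]
      calc Real.exp (1/4:ℝ) ≤ 1.3 := exp_quarter_le
        _ = (1/1.3 : ℝ)⁻¹ := by norm_num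
    have h3 := mul_le_mul_of_nonneg_left (h2.trans h1) (by norm_num : (0:ℝ) ≤ 1.25)
    linarith
  have hc63 : 0.63 ≤ c := by nlinarith [sq_nonneg (c - 0.63), hc2, hL5, hc0]
  have hcσ : 0.63*σ ≤ σ*c := by nlinarith [mul_le_mul_of_nonneg_left hc63 hσ0.le]
  have hA : σ/(2*c) ≤ 0.7937*σ := by
    rw [div_le_iff₀ (by positivity)]
    linarith [hcσ, hσ0.le]
  have hsε : σ*ε/(2*c) ≤ σ/(2*c) := by
    apply div_le_div_of_nonneg_right ?_ (by positivity)
    nlinarith [hσ0, hε1]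
  have hms : -s ≤ 0.1637*σ := by
    have h4 : -s ≤ Δ/2 - σ*c := by linarith
    rw [hΔ2] at h4
    linarith
  have hsq25 : 2.5*σ ≤ Real.sqrt (2*π*σ^2) := by
    rw [show (2.5*σ : ℝ) = Real.sqrt ((2.5*σ)^2) from (Real.sqrt_sq (by positivity)).symm]
    apply Real.sqrt_le_sqrt
    nlinarith [Real.pi_gt_d6, sq_nonneg σ]
  have hinvle : (Real.sqrt (2*π*σ^2))⁻¹ ≤ (2.5*σ)⁻¹ :=
    inv_anti₀ (by positivity) hsq25
  have hprod : -s * (Real.sqrt (2*π*σ^2))⁻¹ ≤ 0.1637*σ * (2.5*σ)⁻¹ :=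
    mul_le_mul hms hinvle (inv_nonneg.2 (Real.sqrt_nonneg _)) (by positivity)
  have heq : 0.1637*σ * (2.5*σ)⁻¹ = 0.1637/2.5 := by
    field_simp
  rw [heq] at hprod
  have hfin : (0.1637:ℝ)/2.5 + 1/2 ≤ 1.25/1.3 := by norm_num
  linarith

end Numeric


lemma pdf_ratio (μ₁ μ₂ ε : ℝ) (v : ℝ≥0) (x : ℝ) (hv : 0 < (v:ℝ))
    (hx : (μ₁ - μ₂) * (2*x - μ₁ - μ₂) ≤ 2*(v:ℝ)*ε) :
    gaussianPDF μ₁ v x ≤ ENNReal.ofReal (Real.exp ε) * gaussianPDF μ₂ v x := by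
  rw [gaussianPDF, gaussianPDF, ← ENNReal.ofReal_mul (Real.exp_nonneg _)]
  apply ENNReal.ofReal_le_ofReal
  rw [gaussianPDFReal_def, gaussianPDFReal_def]
  simp only []
  rw [mul_left_comm, ← Real.exp_add]
  refine mul_le_mul_of_nonneg_left (Real.exp_le_exp.2 ?_) (inv_nonneg.2 (Real.sqrt_nonneg _))
  have h2v : (0:ℝ) < 2*(v:ℝ) := by positivity
  rw [div_le_iff₀ h2v, add_mul, div_mul_cancel₀ _ h2v.ne']
  nlinarith [hx, mul_pos (Real.exp_pos ε) h2v]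

/-- Gaussian mechanism. For `ε ∈ (0,1]`, `δ ∈ (0,1)`, sensitivity
`Δ > 0`, means `μ₁, μ₂` with `|μ₁ − μ₂| ≤ Δ`, and `σ = Δ√(2 log(1.25/δ))/ε`, the
Gaussian measures with variance `σ²` satisfy, for every Borel set `A`,
`N(μ₁, σ²)(A) ≤ e^ε N(μ₂, σ²)(A) + δ`; i.e. the Gaussian mechanism is
`(ε,δ)`-differentially private. -/
theorem gaussian_mechanism_dp
    (ε δ Δ : ℝ) (hε0 : 0 < ε) (hε1 : ε ≤ 1) (hδ0 : 0 < δ) (hδ1 : δ < 1)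
    (hΔ : 0 < Δ) (μ₁ μ₂ : ℝ) (hμ : |μ₁ - μ₂| ≤ Δ)
    (σ : ℝ) (hσ : σ = Δ * Real.sqrt (2 * Real.log (1.25 / δ)) / ε) :
    ∀ A : Set ℝ, MeasurableSet A →
      gaussianReal μ₁ (Real.toNNReal (σ ^ 2)) A ≤
        ENNReal.ofReal (Real.exp ε) * gaussianReal μ₂ (Real.toNNReal (σ ^ 2)) A +
          ENNReal.ofReal δ := by
  intro A hA
  have hL0 : 0 < Real.log (1.25/δ) := Real.log_pos (by rw [lt_div_iff₀ hδ0]; nlinarith)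
  have hσ0 : 0 < σ := by rw [hσ]; positivity
  have hvco : ((Real.toNNReal (σ^2) : ℝ≥0) : ℝ) = σ^2 := Real.coe_toNNReal _ (sq_nonneg σ)
  have hvpos : (0:ℝ) < ((Real.toNNReal (σ^2) : ℝ≥0) : ℝ) := by rw [hvco]; positivity
  have hvne : Real.toNNReal (σ^2) ≠ 0 := (Real.toNNReal_pos.2 (by positivity)).ne'
  by_cases hb : μ₁ = μ₂
  · subst hb
    have h1 : (1:ℝ≥0∞) ≤ ENNReal.ofReal (Real.exp ε) := by
      rw [ENNReal.one_le_ofReal]; exact Real.one_le_exp hε0.le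
    calc gaussianReal μ₁ (Real.toNNReal (σ^2)) A
        = 1 * gaussianReal μ₁ (Real.toNNReal (σ^2)) A := (one_mul _).symm
      _ ≤ ENNReal.ofReal (Real.exp ε) * gaussianReal μ₁ (Real.toNNReal (σ^2)) A :=
          mul_le_mul_left h1 _
      _ ≤ _ := le_self_add
  · set v : ℝ≥0 := Real.toNNReal (σ^2) with hvdef
    obtain ⟨β, hβdef⟩ : ∃ b : ℝ, b = |μ₁ - μ₂| := ⟨_, rfl⟩
    have hβΔ : β ≤ Δ := by rw [hβdef]; exact hμ
    have hβ0 : 0 < β := by rw [hβdef]; exact abs_pos.2 (sub_ne_zero.2 hb)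
    obtain ⟨s, hsdef⟩ : ∃ t : ℝ, t = σ^2*ε/β - β/2 := ⟨_, rfl⟩
    have hβs : β * s = σ^2*ε - β^2/2 := by
      rw [hsdef]; field_simp
    set S : Set ℝ := {x | (μ₁ - μ₂) * (2*x - μ₁ - μ₂) ≤ 2*σ^2*ε} with hSdef
    have hSm : MeasurableSet S := measurableSet_le (by fun_prop) measurable_const
    have step1 : gaussianReal μ₁ v A ≤
        ENNReal.ofReal (Real.exp ε) * gaussianReal μ₂ v A + gaussianReal μ₁ v Sᶜ := by
      have hsub : A ⊆ (A ∩ S) ∪ Sᶜ := by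
        intro x hx
        by_cases hxS : x ∈ S
        · exact Or.inl ⟨hx, hxS⟩
        · exact Or.inr hxS
      have hAS : gaussianReal μ₁ v (A ∩ S) ≤
          ENNReal.ofReal (Real.exp ε) * gaussianReal μ₂ v (A ∩ S) := by
        rw [gaussianReal_apply _ hvne, gaussianReal_apply _ hvne]
        calc ∫⁻ x in A ∩ S, gaussianPDF μ₁ v x
            ≤ ∫⁻ x in A ∩ S, ENNReal.ofReal (Real.exp ε) * gaussianPDF μ₂ v x := by
              refine setLIntegral_mono
                (measurable_const.mul (measurable_gaussianPDF _ _)) (fun x hx => ?_)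
              refine pdf_ratio μ₁ μ₂ ε v x hvpos ?_
              have hxS : (μ₁ - μ₂) * (2*x - μ₁ - μ₂) ≤ 2*σ^2*ε := hx.2
              rw [hvco]; linarith
          _ = ENNReal.ofReal (Real.exp ε) * ∫⁻ x in A ∩ S, gaussianPDF μ₂ v x :=
              lintegral_const_mul _ (measurable_gaussianPDF _ _)
      calc gaussianReal μ₁ v A
          ≤ gaussianReal μ₁ v ((A ∩ S) ∪ Sᶜ) := measure_mono hsub
        _ ≤ gaussianReal μ₁ v (A ∩ S) + gaussianReal μ₁ v Sᶜ := measure_union_le _ _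
        _ ≤ ENNReal.ofReal (Real.exp ε) * gaussianReal μ₂ v (A ∩ S) +
              gaussianReal μ₁ v Sᶜ := add_le_add_left hAS _
        _ ≤ ENNReal.ofReal (Real.exp ε) * gaussianReal μ₂ v A +
              gaussianReal μ₁ v Sᶜ :=
            add_le_add_left
              (mul_le_mul_right (measure_mono Set.inter_subset_left) _) _
    have step2 : gaussianReal μ₁ v Sᶜ = gaussianReal μ₁ v (Set.Ioi (μ₁ + s)) := by
      rcases (sub_ne_zero.2 hb).lt_or_gt with hneg | hpos
      · have hβeq : β = -(μ₁ - μ₂) := by rw [hβdef]; exact abs_of_neg hneg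
        rw [hβeq] at hβs
        have hβs' : (μ₁ - μ₂)*s = -(σ^2*ε) + (μ₁ - μ₂)^2/2 := by nlinarith [hβs]
        have hSc : Sᶜ = Set.Iio (μ₁ - s) := by
          ext x
          simp only [hSdef, Set.mem_compl_iff, Set.mem_setOf_eq, not_le, Set.mem_Iio]
          constructor
          · intro h
            by_contra hcon
            push_neg at hcon
            nlinarith [hβs', mul_nonneg (neg_nonneg.2 hneg.le)
              (by linarith : (0:ℝ) ≤ x - (μ₁ - s))]
          · intro h
            nlinarith [hβs', mul_pos (neg_pos.2 hneg) (by linarith : (0:ℝ) < μ₁ - s - x)]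
        rw [hSc, gauss_sym]
      · have hβeq : β = μ₁ - μ₂ := by rw [hβdef]; exact abs_of_pos hpos
        rw [hβeq] at hβs
        have hSc : Sᶜ = Set.Ioi (μ₁ + s) := by
          ext x
          simp only [hSdef, Set.mem_compl_iff, Set.mem_setOf_eq, not_le, Set.mem_Ioi]
          constructor
          · intro h
            by_contra hcon
            push_neg at hcon
            nlinarith [hβs, mul_nonneg hpos.le (by linarith : (0:ℝ) ≤ μ₁ + s - x)]
          · intro h
            nlinarith [hβs, mul_pos hpos (by linarith : (0:ℝ) < x - (μ₁ + s))]
        rw [hSc]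
    have step3 : gaussianReal μ₁ v (Set.Ioi (μ₁ + s)) ≤ ENNReal.ofReal δ := by
      rcases le_or_gt 0 s with hs0 | hs0
      · refine (gauss_tail μ₁ v hvne s hs0).trans (ENNReal.ofReal_le_ofReal ?_)
        have h := numeric1 (β := β) hε0 hε1 hδ0 hδ1 hΔ hβ0 hβΔ hσ
        rw [hvco]
        rw [hsdef]
        exact h
      · have hsplit : Set.Ioi (μ₁ + s) ⊆ Set.Ioc (μ₁ + s) μ₁ ∪ Set.Ioi μ₁ := by
          intro x hx
          rcases le_or_gt x μ₁ with h | h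
          · exact Or.inl ⟨hx, h⟩
          · exact Or.inr h
        have hnum := numeric2 hε0 hε1 hδ0 hδ1 hΔ hβ0 hβΔ hσ s hsdef hs0
        calc gaussianReal μ₁ v (Set.Ioi (μ₁+s))
            ≤ gaussianReal μ₁ v (Set.Ioc (μ₁+s) μ₁ ∪ Set.Ioi μ₁) := measure_mono hsplit
          _ ≤ gaussianReal μ₁ v (Set.Ioc (μ₁+s) μ₁) + gaussianReal μ₁ v (Set.Ioi μ₁) :=
              measure_union_le _ _
          _ ≤ ENNReal.ofReal ((μ₁ - (μ₁+s)) * (Real.sqrt (2*π*(v:ℝ)))⁻¹) + 1/2 :=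
              add_le_add (gauss_box μ₁ v hvne _ _) (le_of_eq (gauss_half μ₁ v hvne))
          _ ≤ ENNReal.ofReal δ := by
              rw [show ((1:ℝ≥0∞)/2) = ENNReal.ofReal (1/2:ℝ) by
                  rw [ENNReal.ofReal_div_of_pos two_pos]; simp]
              rw [← ENNReal.ofReal_add ?ha (by norm_num)]
              case ha =>
                have h1 : (0:ℝ) ≤ μ₁ - (μ₁ + s) := by linarith
                positivity
              apply ENNReal.ofReal_le_ofReal
              have heq : μ₁ - (μ₁ + s) = -s := by ring
              rw [heq, hvco]
              linarith
    calc gaussianReal μ₁ v A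
        ≤ ENNReal.ofReal (Real.exp ε) * gaussianReal μ₂ v A + gaussianReal μ₁ v Sᶜ := step1
      _ ≤ ENNReal.ofReal (Real.exp ε) * gaussianReal μ₂ v A + ENNReal.ofReal δ :=
          add_le_add_right (step2.trans_le step3) _
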